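/- Let τ: [0,L] → ℝ be continuous and ψ(t) = ∫₀^t τ(z) dz. For q ∈ (0,2π), the function θ_q(t) = 2 arccot(cot(q/2) + ψ(t)) solves the initial value problem θ' = τ(cos(θ) - 1), θ(0) = q; and θ ≡ 0 solves it for q = 0. -/

import Mathlib

open Real

/-- Inverse cotangent with values in (0, π). -/
noncomputable def arccot (x : ℝ) : ℝ := π / 2 - Real.arctan x

lemma cot_eq_inv_tan (x : ℝ) : Real.cot x = (Real.tan x)⁻¹ := by
  rw [Real.cot_eq_cos_div_sin, Real.tan_eq_sin_div_cos, inv_div]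

lemma arccot_cot {θ : ℝ} (h1 : 0 < θ) (h2 : θ < π) : arccot (Real.cot θ) = θ := by
  have : Real.arctan (Real.cot θ) = π / 2 - θ := by
    rw [cot_eq_inv_tan, ← Real.tan_pi_div_two_sub]
    exact Real.arctan_tan (by linarith) (by linarith)
  simp [arccot, this]

lemma cos_two_arccot (x : ℝ) : Real.cos (2 * arccot x) - 1 = -2 / (1 + x ^ 2) := by
  have hx : (0:ℝ) < 1 + x ^ 2 := by positivity
  have h2 : 2 * arccot x = π - 2 * Real.arctan x := by rw [arccot]; ring
  rw [h2, Real.cos_pi_sub, Real.cos_two_mul, Real.cos_arctan]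
  rw [div_pow, one_pow, Real.sq_sqrt hx.le]
  field_simp
  ring

/-- θ_q(t) = 2 arccot(cot(q/2) + ψ(t)) solves θ' = τ(cos θ - 1), θ(0) = q,
    for q ∈ (0,2π); and θ ≡ 0 solves it for q = 0. -/
theorem rectifying_angle_ode_solution
    (L : ℝ) (hL : 0 < L)
    (τ : ℝ → ℝ) (hτ : Continuous τ)
    (ψ : ℝ → ℝ) (hψ : ∀ t, ψ t = ∫ z in (0:ℝ)..t, τ z) :
    (∀ q ∈ Set.Ioo 0 (2 * π),
      (fun t => 2 * arccot (Real.cot (q / 2) + ψ t)) 0 = q ∧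
      ∀ t ∈ Set.Icc 0 L,
        HasDerivAt (fun t => 2 * arccot (Real.cot (q / 2) + ψ t))
          (τ t * (Real.cos (2 * arccot (Real.cot (q / 2) + ψ t)) - 1)) t) ∧
    ((fun _ : ℝ => (0:ℝ)) 0 = 0 ∧
      ∀ t ∈ Set.Icc 0 L,
        HasDerivAt (fun _ : ℝ => (0:ℝ)) (τ t * (Real.cos (0:ℝ) - 1)) t) := by
  have hψ' : ψ = fun t => ∫ z in (0:ℝ)..t, τ z := funext hψ
  subst hψ'
  constructor
  · intro q hq
    constructor
    · simp only
      rw [intervalIntegral.integral_same, add_zero]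
      rw [arccot_cot (by linarith [hq.1]) (by linarith [hq.2])]
      ring
    · intro t _
      set c := Real.cot (q / 2)
      have hψd : HasDerivAt (fun t => ∫ z in (0:ℝ)..t, τ z) (τ t) t :=
        intervalIntegral.integral_hasDerivAt_right (hτ.intervalIntegrable 0 t)
          (hτ.stronglyMeasurableAtFilter _ _) hτ.continuousAt
      set δ := c + ∫ z in (0:ℝ)..t, τ z with hδ
      have hadd : HasDerivAt (fun t => c + ∫ z in (0:ℝ)..t, τ z) (τ t) t :=
        hψd.const_add c
      have harctan : HasDerivAt (fun t => Real.arctan (c + ∫ z in (0:ℝ)..t, τ z))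
          (1 / (1 + δ ^ 2) * τ t) t :=
        by have h := (Real.hasDerivAt_arctan (c + ∫ z in (0:ℝ)..t, τ z)).comp t hadd; exact h
      have : HasDerivAt (fun t => 2 * arccot (c + ∫ z in (0:ℝ)..t, τ z))
          (2 * (-(1 / (1 + δ ^ 2) * τ t))) t := by
        simpa [arccot, sub_eq_add_neg] using (harctan.neg.const_add (π / 2)).const_mul 2
      convert this using 1
      rw [cos_two_arccot]
      ring
  · refine ⟨rfl, fun t _ => ?_⟩
    simpa using hasDerivAt_const t (0:ℝ)
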